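/- Let A be a unital associative ℝ-algebra with involution star and let f ∈ A satisfy star f = f. Then the following are equivalent: (i) for every ∗-representation π of A on a real inner product space V and every vector v ∈ V, one has ⟪π(f)v, v⟫ ≥ 0; (ii) every ℝ-linear functional L : A → ℝ satisfying L((star a)·a) ≥ 0 for all a ∈ A and L(star a) = L(a) for all a ∈ A also satisfies L(f) ≥ 0. -/

import Mathlib

open RealInnerProductSpace

section GNS

variable {A : Type} [Ring A] [Algebra ℝ A] [StarRing A] [StarModule ℝ A]

/-- GNS bilinear form. -/
noncomputable def gnsB (L : A →ₗ[ℝ] ℝ) : A →ₗ[ℝ] A →ₗ[ℝ] ℝ :=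
  LinearMap.mk₂ ℝ (fun a b => L (star a * b))
    (fun a a' b => by simp [star_add, add_mul])
    (fun c a b => by simp [star_smul, smul_mul_assoc])
    (fun a b b' => by simp [mul_add])
    (fun c a b => by simp [mul_smul_comm])

@[simp] lemma gnsB_apply (L : A →ₗ[ℝ] ℝ) (a b : A) : gnsB L a b = L (star a * b) := rfl

lemma gnsB_symm (L : A →ₗ[ℝ] ℝ) (hsym : ∀ a : A, L (star a) = L a) (a b : A) :
    gnsB L a b = gnsB L b a := by
  have := hsym (star b * a)
  simp only [star_mul, star_star] at this
  simp [this]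

lemma gnsB_cs (L : A →ₗ[ℝ] ℝ) (hpos : ∀ a : A, 0 ≤ L (star a * a))
    (hsym : ∀ a : A, L (star a) = L a) (a b : A) :
    (gnsB L a b) ^ 2 ≤ gnsB L a a * gnsB L b b := by
  have key : ∀ t : ℝ, 0 ≤ gnsB L b b * (t * t) + (2 * gnsB L a b) * t + gnsB L a a := by
    intro t
    have h0 : 0 ≤ gnsB L (a + t • b) (a + t • b) := hpos _
    have hba := gnsB_symm L hsym b a
    simp only [map_add, map_smul, LinearMap.add_apply, LinearMap.smul_apply,
      smul_eq_mul] at h0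
    rw [hba] at h0
    calc (0:ℝ) ≤ _ := h0
      _ = gnsB L b b * (t * t) + (2 * gnsB L a b) * t + gnsB L a a := by ring
  have hd := discrim_le_zero key
  rw [discrim] at hd
  nlinarith [hd]

end GNS

section GNS2

variable {A : Type} [Ring A] [Algebra ℝ A] [StarRing A] [StarModule ℝ A]

/-- The null space of the GNS form. -/
noncomputable def gnsN (L : A →ₗ[ℝ] ℝ) : Submodule ℝ A :=
  ⨅ b : A, LinearMap.ker (gnsB L b)

lemma mem_gnsN {L : A →ₗ[ℝ] ℝ} {a : A} : a ∈ gnsN L ↔ ∀ b, gnsB L b a = 0 := by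
  simp [gnsN, Submodule.mem_iInf, LinearMap.mem_ker]

lemma mem_gnsN_of_self {L : A →ₗ[ℝ] ℝ} (hpos : ∀ a : A, 0 ≤ L (star a * a))
    (hsym : ∀ a : A, L (star a) = L a) {a : A} (h : gnsB L a a = 0) : a ∈ gnsN L := by
  rw [mem_gnsN]
  intro b
  have hcs := gnsB_cs L hpos hsym b a
  have hbb : 0 ≤ gnsB L b b := hpos b
  have h2 : (gnsB L b a) ^ 2 ≤ 0 := by nlinarith
  have h3 : (gnsB L b a) ^ 2 = 0 := le_antisymm h2 (sq_nonneg _)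
  exact pow_eq_zero_iff (two_ne_zero) |>.mp h3

lemma gnsB_mul_left (L : A →ₗ[ℝ] ℝ) (b c a : A) :
    gnsB L b (c * a) = gnsB L (star c * b) a := by
  simp [← mul_assoc, star_mul, star_star]

lemma gnsN_mul_mem {L : A →ₗ[ℝ] ℝ} (hpos : ∀ a : A, 0 ≤ L (star a * a))
    (hsym : ∀ a : A, L (star a) = L a) (c : A) {a : A} (ha : a ∈ gnsN L) :
    c * a ∈ gnsN L := by
  rw [mem_gnsN]
  intro b
  rw [gnsB_mul_left]
  exact mem_gnsN.mp ha _

variable (L : A →ₗ[ℝ] ℝ) (hpos : ∀ a : A, 0 ≤ L (star a * a))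
  (hsym : ∀ a : A, L (star a) = L a)

/-- The GNS form, descended in the second argument. -/
noncomputable def gnsInner1 : A →ₗ[ℝ] (A ⧸ gnsN L) →ₗ[ℝ] ℝ where
  toFun a := (gnsN L).liftQ (gnsB L a) (fun x hx => mem_gnsN.mp hx a)
  map_add' a b := by
    apply Submodule.linearMap_qext
    ext x
    show gnsB L (a + b) x = gnsB L a x + gnsB L b x
    simp
  map_smul' c a := by
    apply Submodule.linearMap_qext
    ext x
    show gnsB L (c • a) x = c • gnsB L a x
    simp

@[simp] lemma gnsInner1_apply (a x : A) :
    gnsInner1 L a (Submodule.Quotient.mk x) = gnsB L a x := rfl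

/-- The GNS inner product on the quotient. -/
noncomputable def gnsInner : (A ⧸ gnsN L) →ₗ[ℝ] (A ⧸ gnsN L) →ₗ[ℝ] ℝ :=
  (gnsN L).liftQ (gnsInner1 L) (by
    intro a ha
    apply Submodule.linearMap_qext
    ext x
    simp only [LinearMap.comp_apply, Submodule.mkQ_apply, LinearMap.zero_comp,
      LinearMap.zero_apply, gnsInner1_apply]
    rw [gnsB_symm L hsym]
    exact mem_gnsN.mp ha x)

@[simp] lemma gnsInner_apply (a x : A) :
    gnsInner L hsym (Submodule.Quotient.mk a) (Submodule.Quotient.mk x) = gnsB L a x := rfl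

/-- The GNS inner product space core structure. -/
noncomputable def gnsCore : InnerProductSpace.Core ℝ (A ⧸ gnsN L) where
  inner x y := gnsInner L hsym x y
  conj_inner_symm x y := by
    obtain ⟨a, rfl⟩ := Submodule.Quotient.mk_surjective _ x
    obtain ⟨b, rfl⟩ := Submodule.Quotient.mk_surjective _ y
    simpa using gnsB_symm L hsym b a
  re_inner_nonneg x := by
    obtain ⟨a, rfl⟩ := Submodule.Quotient.mk_surjective _ x
    simpa using hpos a
  add_left x y z := by simp
  smul_left x y r := by simp
  definite x hx := by
    obtain ⟨a, rfl⟩ := Submodule.Quotient.mk_surjective _ x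
    rw [Submodule.Quotient.mk_eq_zero]
    exact mem_gnsN_of_self hpos hsym (by simpa using hx)

/-- Left multiplication on the GNS quotient, as a linear map. -/
noncomputable def gnsRepL : A →ₗ[ℝ] Module.End ℝ (A ⧸ gnsN L) where
  toFun a := Submodule.mapQ _ _ (LinearMap.mulLeft ℝ a)
    (fun x hx => gnsN_mul_mem hpos hsym a hx)
  map_add' a b := by
    apply Submodule.linearMap_qext
    ext x
    show (Submodule.Quotient.mk ((a + b) * x) : A ⧸ gnsN L) = Submodule.Quotient.mk (a * x) + Submodule.Quotient.mk (b * x)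
    simp [Submodule.mapQ_apply, add_mul]
  map_smul' c a := by
    apply Submodule.linearMap_qext
    ext x
    show (Submodule.Quotient.mk ((c • a) * x) : A ⧸ gnsN L) = c • Submodule.Quotient.mk (a * x)
    simp [Submodule.mapQ_apply, smul_mul_assoc]

/-- The GNS representation. -/
noncomputable def gnsRep : A →ₐ[ℝ] Module.End ℝ (A ⧸ gnsN L) :=
  AlgHom.ofLinearMap (gnsRepL L hpos hsym)
    (by
      apply Submodule.linearMap_qext
      ext x
      simp [gnsRepL, Submodule.mapQ_apply])
    (by
      intro a b
      apply Submodule.linearMap_qext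
      ext x
      simp [gnsRepL, Submodule.mapQ_apply, Module.End.mul_apply, mul_assoc]
      rfl)

@[simp] lemma gnsRep_apply (a x : A) :
    gnsRep L hpos hsym a (Submodule.Quotient.mk x) = Submodule.Quotient.mk (a * x) := by
  simp [gnsRep, AlgHom.ofLinearMap, gnsRepL, Submodule.mapQ_apply]
  rfl

lemma gnsRep_adjoint (a : A) (u w : A ⧸ gnsN L) :
    gnsInner L hsym (gnsRep L hpos hsym a u) w
      = gnsInner L hsym u (gnsRep L hpos hsym (star a) w) := by
  obtain ⟨x, rfl⟩ := Submodule.Quotient.mk_surjective _ u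
  obtain ⟨y, rfl⟩ := Submodule.Quotient.mk_surjective _ w
  simp [star_mul, star_star, mul_assoc]

end GNS2

/-- For a symmetric element `f` of a unital ℝ-algebra with involution `A`:
`⟪π(f)v, v⟫ ≥ 0` for every ∗-representation `π` and every vector `v` iff every positive
symmetric ℝ-linear functional `L` on `A` satisfies `L(f) ≥ 0`. -/
theorem statement7 (A : Type) [Ring A] [Algebra ℝ A] [StarRing A] [StarModule ℝ A]
    (f : A) (hf : star f = f) :
    (∀ (V : Type) [NormedAddCommGroup V] [InnerProductSpace ℝ V]
        (π : A →ₐ[ℝ] Module.End ℝ V),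
        (∀ (a : A) (u w : V), ⟪π a u, w⟫ = ⟪u, π (star a) w⟫) →
        ∀ v : V, 0 ≤ ⟪π f v, v⟫) ↔
    (∀ L : A →ₗ[ℝ] ℝ,
        (∀ a : A, 0 ≤ L (star a * a)) →
        (∀ a : A, L (star a) = L a) →
        0 ≤ L f) := by
  constructor
  · intro h L hpos hsym
    letI : NormedAddCommGroup (A ⧸ gnsN L) := (gnsCore L hpos hsym).toNormedAddCommGroup
    letI : InnerProductSpace ℝ (A ⧸ gnsN L) := InnerProductSpace.ofCore (gnsCore L hpos hsym).toCore
    have hinner : ∀ x y : A ⧸ gnsN L, ⟪x, y⟫ = gnsInner L hsym x y := fun _ _ => rfl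
    have key := h (A ⧸ gnsN L) (gnsRep L hpos hsym) (fun a u w => by
      rw [hinner, hinner]; exact gnsRep_adjoint L hpos hsym a u w)
      (Submodule.Quotient.mk 1)
    rw [hinner] at key
    simpa [hf] using key
  · intro h V _ _ π hadj v
    set L : A →ₗ[ℝ] ℝ :=
      { toFun := fun a => ⟪π a v, v⟫
        map_add' := fun a b => by simp [inner_add_left]
        map_smul' := fun c a => by simp [inner_smul_left] } with hL
    have hpos : ∀ a : A, 0 ≤ L (star a * a) := by
      intro a
      have : L (star a * a) = ⟪π a v, π a v⟫ := by
        simp only [hL, LinearMap.coe_mk, AddHom.coe_mk, map_mul]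
        rw [show (π (star a) * π a) v = π (star a) (π a v) from rfl, hadj, star_star]
      rw [this]
      exact real_inner_self_nonneg
    have hsym : ∀ a : A, L (star a) = L a := by
      intro a
      simp only [hL, LinearMap.coe_mk, AddHom.coe_mk]
      rw [hadj a v v]
      exact real_inner_comm _ _
    exact h L hpos hsym
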